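/- The function ξ(y,z,x00,x01,x10,x11) = ∫₀^y ∫₀^z min{ x00+λ+μ, x01+λ+z−μ, x10+y−λ+μ, x11+y−λ+z−μ } dμ dλ agrees with a polynomial of degree at most 3 in (y,z,x00,x01,x10,x11) on the set of compliant tuples satisfying x10 + x01 − x00 − x11 ≥ 0, and with a (possibly different) polynomial of degree at most 3 on the set of compliant tuples with x10 + x01 − x00 − x11 < 0. -/

import Mathlib

/-- The 6-tuple `(y,z,x00,x01,x10,x11)` is *compliant*: `y,z > 0`, the `x`'s are
nonnegative, and each `x_{αβ}` equals the shortest-path distance `d_K(a_α,b_β)` in the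
weighted complete graph on `{a0,a1,b0,b1}` with `ℓ(a0a1)=y`, `ℓ(b0b1)=z`,
`ℓ(a_α b_β)=x_{αβ}`; equivalently, the triangle-type inequalities hold. -/
def Compliant (y z x00 x01 x10 x11 : ℝ) : Prop :=
  0 < y ∧ 0 < z ∧ 0 ≤ x00 ∧ 0 ≤ x01 ∧ 0 ≤ x10 ∧ 0 ≤ x11 ∧
  x00 ≤ x10 + y ∧ x10 ≤ x00 + y ∧ x01 ≤ x11 + y ∧ x11 ≤ x01 + y ∧
  x00 ≤ x01 + z ∧ x01 ≤ x00 + z ∧ x10 ≤ x11 + z ∧ x11 ≤ x10 + z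

/-- The total sum of distances between the points of edge `a0a1` and the points of
edge `b0b1` of the continuous graph: the double integral of the lower envelope of the
four candidate path lengths. -/
noncomputable def xi (y z x00 x01 x10 x11 : ℝ) : ℝ :=
  ∫ lam in (0:ℝ)..y, ∫ mu in (0:ℝ)..z,
    min (min (x00 + lam + mu) (x01 + lam + (z - mu)))
        (min (x10 + (y - lam) + mu) (x11 + (y - lam) + (z - mu)))

open MvPolynomial in
noncomputable def Ppoly : MvPolynomial (Fin 6) ℝ :=
  C ((1 : ℝ)/24) * X 5 * X 5 * X 5
  + C (-(1 : ℝ)/8) * X 4 * X 4 * X 5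
  + C ((1 : ℝ)/12) * X 4 * X 4 * X 4
  + C (-(1 : ℝ)/8) * X 3 * X 3 * X 5
  + C ((1 : ℝ)/12) * X 3 * X 3 * X 3
  + C (-(1 : ℝ)/8) * X 2 * X 5 * X 5
  + C ((1 : ℝ)/4) * X 2 * X 4 * X 5
  + C (-(1 : ℝ)/8) * X 2 * X 4 * X 4
  + C ((1 : ℝ)/4) * X 2 * X 3 * X 5
  + C (-(1 : ℝ)/8) * X 2 * X 3 * X 3
  + C (-(1 : ℝ)/8) * X 2 * X 2 * X 5
  + C ((1 : ℝ)/24) * X 2 * X 2 * X 2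
  + C (-(1 : ℝ)/8) * X 1 * X 5 * X 5
  + C (-(1 : ℝ)/8) * X 1 * X 4 * X 4
  + C ((1 : ℝ)/4) * X 1 * X 3 * X 5
  + C (-(1 : ℝ)/8) * X 1 * X 3 * X 3
  + C ((1 : ℝ)/4) * X 1 * X 2 * X 4
  + C (-(1 : ℝ)/8) * X 1 * X 2 * X 2
  + C (-(1 : ℝ)/8) * X 0 * X 5 * X 5
  + C ((1 : ℝ)/4) * X 0 * X 4 * X 5
  + C (-(1 : ℝ)/8) * X 0 * X 4 * X 4
  + C (-(1 : ℝ)/8) * X 0 * X 3 * X 3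
  + C ((1 : ℝ)/4) * X 0 * X 2 * X 3
  + C (-(1 : ℝ)/8) * X 0 * X 2 * X 2
  + C ((1 : ℝ)/4) * X 0 * X 1 * X 5
  + C ((1 : ℝ)/4) * X 0 * X 1 * X 4
  + C ((1 : ℝ)/4) * X 0 * X 1 * X 3
  + C ((1 : ℝ)/4) * X 0 * X 1 * X 2
  + C ((1 : ℝ)/4) * X 0 * X 1 * X 1
  + C ((1 : ℝ)/4) * X 0 * X 0 * X 1
open MvPolynomial in
noncomputable def Qpoly : MvPolynomial (Fin 6) ℝ :=
  C ((1 : ℝ)/12) * X 5 * X 5 * X 5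
  + C (-(1 : ℝ)/8) * X 4 * X 5 * X 5
  + C ((1 : ℝ)/24) * X 4 * X 4 * X 4
  + C (-(1 : ℝ)/8) * X 3 * X 5 * X 5
  + C ((1 : ℝ)/4) * X 3 * X 4 * X 5
  + C (-(1 : ℝ)/8) * X 3 * X 4 * X 4
  + C (-(1 : ℝ)/8) * X 3 * X 3 * X 4
  + C ((1 : ℝ)/24) * X 3 * X 3 * X 3
  + C ((1 : ℝ)/4) * X 2 * X 3 * X 4
  + C (-(1 : ℝ)/8) * X 2 * X 2 * X 4
  + C (-(1 : ℝ)/8) * X 2 * X 2 * X 3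
  + C ((1 : ℝ)/12) * X 2 * X 2 * X 2
  + C (-(1 : ℝ)/8) * X 1 * X 5 * X 5
  + C (-(1 : ℝ)/8) * X 1 * X 4 * X 4
  + C ((1 : ℝ)/4) * X 1 * X 3 * X 5
  + C (-(1 : ℝ)/8) * X 1 * X 3 * X 3
  + C ((1 : ℝ)/4) * X 1 * X 2 * X 4
  + C (-(1 : ℝ)/8) * X 1 * X 2 * X 2
  + C (-(1 : ℝ)/8) * X 0 * X 5 * X 5
  + C ((1 : ℝ)/4) * X 0 * X 4 * X 5
  + C (-(1 : ℝ)/8) * X 0 * X 4 * X 4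
  + C (-(1 : ℝ)/8) * X 0 * X 3 * X 3
  + C ((1 : ℝ)/4) * X 0 * X 2 * X 3
  + C (-(1 : ℝ)/8) * X 0 * X 2 * X 2
  + C ((1 : ℝ)/4) * X 0 * X 1 * X 5
  + C ((1 : ℝ)/4) * X 0 * X 1 * X 4
  + C ((1 : ℝ)/4) * X 0 * X 1 * X 3
  + C ((1 : ℝ)/4) * X 0 * X 1 * X 2
  + C ((1 : ℝ)/4) * X 0 * X 1 * X 1
  + C ((1 : ℝ)/4) * X 0 * X 0 * X 1

open MvPolynomial in
lemma deg_t3 (a : ℝ) (i j k : Fin 6) :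
    (C a * X i * X j * X k : MvPolynomial (Fin 6) ℝ).totalDegree ≤ 3 := by
  have h1 : (C a * X i : MvPolynomial (Fin 6) ℝ).totalDegree ≤ 1 :=
    (totalDegree_mul _ _).trans (by simp [totalDegree_C, totalDegree_X])
  have h2 : (C a * X i * X j : MvPolynomial (Fin 6) ℝ).totalDegree ≤ 2 :=
    (totalDegree_mul _ _).trans (by simpa [totalDegree_X] using add_le_add h1 (totalDegree_X (R := ℝ) j).le)
  exact (totalDegree_mul _ _).trans (by simpa [totalDegree_X] using add_le_add h2 (totalDegree_X (R := ℝ) k).le)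

lemma deg_add3 {p q : MvPolynomial (Fin 6) ℝ} (hp : p.totalDegree ≤ 3)
    (hq : q.totalDegree ≤ 3) : (p + q).totalDegree ≤ 3 :=
  (MvPolynomial.totalDegree_add _ _).trans (max_le hp hq)

lemma Ppoly_deg : Ppoly.totalDegree ≤ 3 := by
  unfold Ppoly; repeat' apply deg_add3
  all_goals exact deg_t3 _ _ _ _

lemma Qpoly_deg : Qpoly.totalDegree ≤ 3 := by
  unfold Qpoly; repeat' apply deg_add3
  all_goals exact deg_t3 _ _ _ _

lemma poly_int (a b c0 c1 c2 : ℝ) :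
    (∫ t in a..b, (c0 + c1 * t + c2 * t ^ 2))
      = c0 * (b - a) + c1 * (b ^ 2 - a ^ 2) / 2 + c2 * (b ^ 3 - a ^ 3) / 3 := by
  have hderiv : ∀ t ∈ Set.uIcc a b,
      HasDerivAt (fun t : ℝ => c0 * t + c1 * t ^ 2 / 2 + c2 * t ^ 3 / 3)
        (c0 + c1 * t + c2 * t ^ 2) t := by
    intro t _
    have hp2 : HasDerivAt (fun t : ℝ => t ^ 2) (2 * t) t := by
      simpa using hasDerivAt_pow 2 t
    have hp3 : HasDerivAt (fun t : ℝ => t ^ 3) (3 * t ^ 2) t := by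
      simpa using hasDerivAt_pow 3 t
    have h := (((hasDerivAt_id t).const_mul c0).add
      ((hp2.const_mul c1).div_const 2)).add ((hp3.const_mul c2).div_const 3)
    refine h.congr_deriv ?_
    ring
  rw [intervalIntegral.integral_eq_sub_of_hasDerivAt hderiv
    ((by fun_prop : Continuous fun t : ℝ => c0 + c1 * t + c2 * t ^ 2).intervalIntegrable _ _)]
  ring

lemma min_sub_min_le (a b c d : ℝ) : min a b - min c d ≤ max |a - c| |b - d| := by
  rcases le_total c d with h | h
  · rw [min_eq_left h]
    calc min a b - c ≤ a - c := sub_le_sub_right (min_le_left a b) c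
    _ ≤ |a - c| := le_abs_self _
    _ ≤ _ := le_max_left _ _
  · rw [min_eq_right h]
    calc min a b - d ≤ b - d := sub_le_sub_right (min_le_right a b) d
    _ ≤ |b - d| := le_abs_self _
    _ ≤ _ := le_max_right _ _

lemma abs_min_sub_min (a b c d : ℝ) : |min a b - min c d| ≤ max |a - c| |b - d| := by
  rw [abs_sub_le_iff]
  refine ⟨min_sub_min_le a b c d, ?_⟩
  simpa [abs_sub_comm] using min_sub_min_le c d a b

lemma inner_int (A B z : ℝ) (h : |A - B| ≤ z) :
    (∫ mu in (0:ℝ)..z, min (A + mu) (B + (z - mu)))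
      = z * (A + B) / 2 + z ^ 2 / 4 - (A - B) ^ 2 / 4 := by
  obtain ⟨h1, h2⟩ := abs_le.mp h
  have hc0 : (0:ℝ) ≤ (B - A + z) / 2 := by linarith
  have hcz : (B - A + z) / 2 ≤ z := by linarith
  have hcont : Continuous fun mu : ℝ => min (A + mu) (B + (z - mu)) := by fun_prop
  rw [← intervalIntegral.integral_add_adjacent_intervals
    (hcont.intervalIntegrable 0 ((B - A + z) / 2)) (hcont.intervalIntegrable ((B - A + z) / 2) z)]
  have e1 : (∫ mu in (0:ℝ)..((B - A + z) / 2), min (A + mu) (B + (z - mu)))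
      = ∫ mu in (0:ℝ)..((B - A + z) / 2), (A + 1 * mu + 0 * mu ^ 2) := by
    apply intervalIntegral.integral_congr
    intro mu hmu
    rw [Set.uIcc_of_le hc0] at hmu
    have hm2 : mu ≤ (B - A + z) / 2 := hmu.2
    show min (A + mu) (B + (z - mu)) = A + 1 * mu + 0 * mu ^ 2
    rw [min_eq_left (by linarith)]
    ring
  have e2 : (∫ mu in ((B - A + z) / 2)..z, min (A + mu) (B + (z - mu)))
      = ∫ mu in ((B - A + z) / 2)..z, ((B + z) + (-1) * mu + 0 * mu ^ 2) := by
    apply intervalIntegral.integral_congr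
    intro mu hmu
    rw [Set.uIcc_of_le hcz] at hmu
    have hm1 : (B - A + z) / 2 ≤ mu := hmu.1
    show min (A + mu) (B + (z - mu)) = B + z + (-1) * mu + 0 * mu ^ 2
    rw [min_eq_right (by linarith)]
    ring
  rw [e1, e2, poly_int, poly_int]
  ring

lemma vec6_0 (a b c d e f : ℝ) : ![a,b,c,d,e,f] 0 = a := rfl
lemma vec6_1 (a b c d e f : ℝ) : ![a,b,c,d,e,f] 1 = b := rfl
lemma vec6_2 (a b c d e f : ℝ) : ![a,b,c,d,e,f] 2 = c := rfl
lemma vec6_3 (a b c d e f : ℝ) : ![a,b,c,d,e,f] 3 = d := rfl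
lemma vec6_4 (a b c d e f : ℝ) : ![a,b,c,d,e,f] 4 = e := rfl
lemma vec6_5 (a b c d e f : ℝ) : ![a,b,c,d,e,f] 5 = f := rfl

lemma Ppoly_eval (y z x00 x01 x10 x11 : ℝ) :
    MvPolynomial.eval ![y, z, x00, x01, x10, x11] Ppoly
      = (1/24 : ℝ) * x11^3
      + (-(1/8) : ℝ) * x10^2 * x11
      + (1/12 : ℝ) * x10^3
      + (-(1/8) : ℝ) * x01^2 * x11
      + (1/12 : ℝ) * x01^3
      + (-(1/8) : ℝ) * x00 * x11^2
      + (1/4 : ℝ) * x00 * x10 * x11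
      + (-(1/8) : ℝ) * x00 * x10^2
      + (1/4 : ℝ) * x00 * x01 * x11
      + (-(1/8) : ℝ) * x00 * x01^2
      + (-(1/8) : ℝ) * x00^2 * x11
      + (1/24 : ℝ) * x00^3
      + (-(1/8) : ℝ) * z * x11^2
      + (-(1/8) : ℝ) * z * x10^2
      + (1/4 : ℝ) * z * x01 * x11
      + (-(1/8) : ℝ) * z * x01^2
      + (1/4 : ℝ) * z * x00 * x10
      + (-(1/8) : ℝ) * z * x00^2
      + (-(1/8) : ℝ) * y * x11^2
      + (1/4 : ℝ) * y * x10 * x11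
      + (-(1/8) : ℝ) * y * x10^2
      + (-(1/8) : ℝ) * y * x01^2
      + (1/4 : ℝ) * y * x00 * x01
      + (-(1/8) : ℝ) * y * x00^2
      + (1/4 : ℝ) * y * z * x11
      + (1/4 : ℝ) * y * z * x10
      + (1/4 : ℝ) * y * z * x01
      + (1/4 : ℝ) * y * z * x00
      + (1/4 : ℝ) * y * z^2
      + (1/4 : ℝ) * y^2 * z := by
  simp only [Ppoly, map_add, map_mul, MvPolynomial.eval_C, MvPolynomial.eval_X,
    vec6_0, vec6_1, vec6_2, vec6_3, vec6_4, vec6_5]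
  ring

lemma Qpoly_eval (y z x00 x01 x10 x11 : ℝ) :
    MvPolynomial.eval ![y, z, x00, x01, x10, x11] Qpoly
      = (1/12 : ℝ) * x11^3
      + (-(1/8) : ℝ) * x10 * x11^2
      + (1/24 : ℝ) * x10^3
      + (-(1/8) : ℝ) * x01 * x11^2
      + (1/4 : ℝ) * x01 * x10 * x11
      + (-(1/8) : ℝ) * x01 * x10^2
      + (-(1/8) : ℝ) * x01^2 * x10
      + (1/24 : ℝ) * x01^3
      + (1/4 : ℝ) * x00 * x01 * x10
      + (-(1/8) : ℝ) * x00^2 * x10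
      + (-(1/8) : ℝ) * x00^2 * x01
      + (1/12 : ℝ) * x00^3
      + (-(1/8) : ℝ) * z * x11^2
      + (-(1/8) : ℝ) * z * x10^2
      + (1/4 : ℝ) * z * x01 * x11
      + (-(1/8) : ℝ) * z * x01^2
      + (1/4 : ℝ) * z * x00 * x10
      + (-(1/8) : ℝ) * z * x00^2
      + (-(1/8) : ℝ) * y * x11^2
      + (1/4 : ℝ) * y * x10 * x11
      + (-(1/8) : ℝ) * y * x10^2
      + (-(1/8) : ℝ) * y * x01^2
      + (1/4 : ℝ) * y * x00 * x01
      + (-(1/8) : ℝ) * y * x00^2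
      + (1/4 : ℝ) * y * z * x11
      + (1/4 : ℝ) * y * z * x10
      + (1/4 : ℝ) * y * z * x01
      + (1/4 : ℝ) * y * z * x00
      + (1/4 : ℝ) * y * z^2
      + (1/4 : ℝ) * y^2 * z := by
  simp only [Qpoly, map_add, map_mul, MvPolynomial.eval_C, MvPolynomial.eval_X,
    vec6_0, vec6_1, vec6_2, vec6_3, vec6_4, vec6_5]
  ring


theorem xi_piecewise_polynomial :
    ∃ P Q : MvPolynomial (Fin 6) ℝ, P.totalDegree ≤ 3 ∧ Q.totalDegree ≤ 3 ∧
      ∀ y z x00 x01 x10 x11 : ℝ, Compliant y z x00 x01 x10 x11 →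
        (0 ≤ x10 + x01 - x00 - x11 →
          xi y z x00 x01 x10 x11 = MvPolynomial.eval ![y, z, x00, x01, x10, x11] P) ∧
        (x10 + x01 - x00 - x11 < 0 →
          xi y z x00 x01 x10 x11 = MvPolynomial.eval ![y, z, x00, x01, x10, x11] Q) := by
  refine ⟨Ppoly, Qpoly, Ppoly_deg, Qpoly_deg, ?_⟩
  intro y z x00 x01 x10 x11 hcomp
  obtain ⟨hy, hz, h00, h01, h10, h11, c1, c2, c3, c4, c5, c6, c7, c8⟩ := hcomp
  have hstep1 : xi y z x00 x01 x10 x11 = ∫ lam in (0:ℝ)..y,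
      (z * (min (x00 + lam) (x10 + (y - lam)) + min (x01 + lam) (x11 + (y - lam))) / 2
        + z ^ 2 / 4
        - (min (x00 + lam) (x10 + (y - lam)) - min (x01 + lam) (x11 + (y - lam))) ^ 2 / 4) := by
    unfold xi
    apply intervalIntegral.integral_congr
    intro lam _
    have key : ∀ mu : ℝ, min (min (x00 + lam + mu) (x01 + lam + (z - mu)))
        (min (x10 + (y - lam) + mu) (x11 + (y - lam) + (z - mu)))
        = min (min (x00 + lam) (x10 + (y - lam)) + mu)
            (min (x01 + lam) (x11 + (y - lam)) + (z - mu)) := by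
      intro mu
      rw [min_min_min_comm, min_add_add_right, min_add_add_right]
    simp only [key]
    apply inner_int
    refine le_trans (abs_min_sub_min _ _ _ _) (max_le ?_ ?_)
    · rw [show x00 + lam - (x01 + lam) = x00 - x01 by ring]
      exact abs_le.mpr ⟨by linarith, by linarith⟩
    · rw [show x10 + (y - lam) - (x11 + (y - lam)) = x10 - x11 by ring]
      exact abs_le.mpr ⟨by linarith, by linarith⟩
  have hG : Continuous fun lam : ℝ =>
      (z * (min (x00 + lam) (x10 + (y - lam)) + min (x01 + lam) (x11 + (y - lam))) / 2
        + z ^ 2 / 4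
        - (min (x00 + lam) (x10 + (y - lam)) - min (x01 + lam) (x11 + (y - lam))) ^ 2 / 4) := by
    fun_prop
  constructor
  · -- case 0 ≤ x10 + x01 - x00 - x11
    intro hs
    have ht10 : (0:ℝ) ≤ (x11 + y - x01) / 2 := by linarith
    have ht12 : (x11 + y - x01) / 2 ≤ (x10 + y - x00) / 2 := by linarith
    have ht2y : (x10 + y - x00) / 2 ≤ y := by linarith
    rw [hstep1,
      ← intervalIntegral.integral_add_adjacent_intervals
        (hG.intervalIntegrable 0 ((x11 + y - x01) / 2)) (hG.intervalIntegrable _ y),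
      ← intervalIntegral.integral_add_adjacent_intervals
        (hG.intervalIntegrable ((x11 + y - x01) / 2) ((x10 + y - x00) / 2))
        (hG.intervalIntegrable _ y)]
    have e1 : (∫ lam in (0:ℝ)..((x11 + y - x01) / 2),
        (z * (min (x00 + lam) (x10 + (y - lam)) + min (x01 + lam) (x11 + (y - lam))) / 2
          + z ^ 2 / 4
          - (min (x00 + lam) (x10 + (y - lam)) - min (x01 + lam) (x11 + (y - lam))) ^ 2 / 4))
        = ∫ lam in (0:ℝ)..((x11 + y - x01) / 2),
          ((z * (x00 + x01) / 2 + z ^ 2 / 4 - (x00 - x01) ^ 2 / 4) + z * lam + 0 * lam ^ 2) := by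
      apply intervalIntegral.integral_congr
      intro lam hlam
      rw [Set.uIcc_of_le ht10] at hlam
      obtain ⟨hl0, hl1⟩ := hlam
      beta_reduce
      rw [min_eq_left (by linarith), min_eq_left (by linarith)]
      ring
    have e2 : (∫ lam in ((x11 + y - x01) / 2)..((x10 + y - x00) / 2),
        (z * (min (x00 + lam) (x10 + (y - lam)) + min (x01 + lam) (x11 + (y - lam))) / 2
          + z ^ 2 / 4
          - (min (x00 + lam) (x10 + (y - lam)) - min (x01 + lam) (x11 + (y - lam))) ^ 2 / 4))
        = ∫ lam in ((x11 + y - x01) / 2)..((x10 + y - x00) / 2),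
          ((z * (x00 + x11 + y) / 2 + z ^ 2 / 4 - (x00 - x11 - y) ^ 2 / 4)
            + (-(x00 - x11 - y)) * lam + (-1) * lam ^ 2) := by
      apply intervalIntegral.integral_congr
      intro lam hlam
      rw [Set.uIcc_of_le ht12] at hlam
      obtain ⟨hl0, hl1⟩ := hlam
      beta_reduce
      rw [min_eq_left (by linarith), min_eq_right (by linarith)]
      ring
    have e3 : (∫ lam in ((x10 + y - x00) / 2)..y,
        (z * (min (x00 + lam) (x10 + (y - lam)) + min (x01 + lam) (x11 + (y - lam))) / 2
          + z ^ 2 / 4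
          - (min (x00 + lam) (x10 + (y - lam)) - min (x01 + lam) (x11 + (y - lam))) ^ 2 / 4))
        = ∫ lam in ((x10 + y - x00) / 2)..y,
          ((z * (x10 + x11 + 2 * y) / 2 + z ^ 2 / 4 - (x10 - x11) ^ 2 / 4)
            + (-z) * lam + 0 * lam ^ 2) := by
      apply intervalIntegral.integral_congr
      intro lam hlam
      rw [Set.uIcc_of_le ht2y] at hlam
      obtain ⟨hl0, hl1⟩ := hlam
      beta_reduce
      rw [min_eq_right (by linarith), min_eq_right (by linarith)]
      ring
    rw [e1.trans (poly_int _ _ _ _ _), e2.trans (poly_int _ _ _ _ _),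
      e3.trans (poly_int _ _ _ _ _), Ppoly_eval]
    ring
  · -- case x10 + x01 - x00 - x11 < 0
    intro hs
    have ht10 : (0:ℝ) ≤ (x10 + y - x00) / 2 := by linarith
    have ht12 : (x10 + y - x00) / 2 ≤ (x11 + y - x01) / 2 := by linarith
    have ht2y : (x11 + y - x01) / 2 ≤ y := by linarith
    rw [hstep1,
      ← intervalIntegral.integral_add_adjacent_intervals
        (hG.intervalIntegrable 0 ((x10 + y - x00) / 2)) (hG.intervalIntegrable _ y),
      ← intervalIntegral.integral_add_adjacent_intervals
        (hG.intervalIntegrable ((x10 + y - x00) / 2) ((x11 + y - x01) / 2))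
        (hG.intervalIntegrable _ y)]
    have e1 : (∫ lam in (0:ℝ)..((x10 + y - x00) / 2),
        (z * (min (x00 + lam) (x10 + (y - lam)) + min (x01 + lam) (x11 + (y - lam))) / 2
          + z ^ 2 / 4
          - (min (x00 + lam) (x10 + (y - lam)) - min (x01 + lam) (x11 + (y - lam))) ^ 2 / 4))
        = ∫ lam in (0:ℝ)..((x10 + y - x00) / 2),
          ((z * (x00 + x01) / 2 + z ^ 2 / 4 - (x00 - x01) ^ 2 / 4) + z * lam + 0 * lam ^ 2) := by
      apply intervalIntegral.integral_congr
      intro lam hlam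
      rw [Set.uIcc_of_le ht10] at hlam
      obtain ⟨hl0, hl1⟩ := hlam
      beta_reduce
      rw [min_eq_left (by linarith), min_eq_left (by linarith)]
      ring
    have e2 : (∫ lam in ((x10 + y - x00) / 2)..((x11 + y - x01) / 2),
        (z * (min (x00 + lam) (x10 + (y - lam)) + min (x01 + lam) (x11 + (y - lam))) / 2
          + z ^ 2 / 4
          - (min (x00 + lam) (x10 + (y - lam)) - min (x01 + lam) (x11 + (y - lam))) ^ 2 / 4))
        = ∫ lam in ((x10 + y - x00) / 2)..((x11 + y - x01) / 2),
          ((z * (x10 + x01 + y) / 2 + z ^ 2 / 4 - (x10 + y - x01) ^ 2 / 4)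
            + (x10 + y - x01) * lam + (-1) * lam ^ 2) := by
      apply intervalIntegral.integral_congr
      intro lam hlam
      rw [Set.uIcc_of_le ht12] at hlam
      obtain ⟨hl0, hl1⟩ := hlam
      beta_reduce
      rw [min_eq_right (by linarith), min_eq_left (by linarith)]
      ring
    have e3 : (∫ lam in ((x11 + y - x01) / 2)..y,
        (z * (min (x00 + lam) (x10 + (y - lam)) + min (x01 + lam) (x11 + (y - lam))) / 2
          + z ^ 2 / 4
          - (min (x00 + lam) (x10 + (y - lam)) - min (x01 + lam) (x11 + (y - lam))) ^ 2 / 4))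
        = ∫ lam in ((x11 + y - x01) / 2)..y,
          ((z * (x10 + x11 + 2 * y) / 2 + z ^ 2 / 4 - (x10 - x11) ^ 2 / 4)
            + (-z) * lam + 0 * lam ^ 2) := by
      apply intervalIntegral.integral_congr
      intro lam hlam
      rw [Set.uIcc_of_le ht2y] at hlam
      obtain ⟨hl0, hl1⟩ := hlam
      beta_reduce
      rw [min_eq_right (by linarith), min_eq_right (by linarith)]
      ring
    rw [e1.trans (poly_int _ _ _ _ _), e2.trans (poly_int _ _ _ _ _),
      e3.trans (poly_int _ _ _ _ _), Qpoly_eval]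
    ring
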